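/- Any head v-reduction sequence can be rearranged: if M head-v-reduces (in several steps, mixing head β_v and head σ steps) to M', then there exists N such that M head-β_v-reduces (several steps) to N and N head-σ-reduces (several steps) to M'. -/

import Mathlib

/-- Terms of the call-by-value λ-calculus, in de Bruijn notation. -/
inductive Term : Type
  | var : ℕ → Term
  | lam : Term → Term
  | app : Term → Term → Term

namespace Term

/-- Values are variables and abstractions. -/
def isValue : Term → Prop
  | var _ => True
  | lam _ => True
  | app _ _ => False

/-- Shift free de Bruijn indices ≥ d by one. -/
def lift (d : ℕ) : Term → Term
  | var n => if n < d then var n else var (n+1)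
  | lam M => lam (lift (d+1) M)
  | app M N => app (lift d M) (lift d N)

/-- Capture-avoiding substitution of `V` for index `k`. -/
def subst : Term → ℕ → Term → Term
  | var n, k, V => if n = k then V else if k < n then var (n-1) else var n
  | lam M, k, V => lam (subst M (k+1) (lift 0 V))
  | app M N, k, V => app (subst M k V) (subst N k V)

/-- Apply a term to a list of arguments: `appList M [M₁,…,Mₘ] = M M₁ … Mₘ`. -/
def appList : Term → List Term → Term
  | M, [] => M
  | M, N :: Ns => appList (app M N) Ns

/-- Root σ-reduction rules σ₁ and σ₃ (freshness handled by lifting). -/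
inductive SigmaBase : Term → Term → Prop
  | sigma1 (M N L : Term) :
      SigmaBase (app (app (lam M) N) L) (app (lam (app M (lift 0 L))) N)
  | sigma3 (V L N : Term) : isValue V →
      SigmaBase (app V (app (lam L) N)) (app (lam (app (lift 0 V) L)) N)

/-- Root rules of v-reduction: β_v, σ₁ and σ₃. -/
inductive VBase : Term → Term → Prop
  | beta (M V : Term) : isValue V → VBase (app (lam M) V) (subst M 0 V)
  | sigma1 (M N L : Term) :
      VBase (app (app (lam M) N) L) (app (lam (app M (lift 0 L))) N)
  | sigma3 (V L N : Term) : isValue V →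
      VBase (app V (app (lam L) N)) (app (lam (app (lift 0 V) L)) N)

/-- Contextual closure of a root relation. -/
inductive Ctx (r : Term → Term → Prop) : Term → Term → Prop
  | base {M M'} : r M M' → Ctx r M M'
  | lam {M M'} : Ctx r M M' → Ctx r (lam M) (lam M')
  | appL {M M'} (N : Term) : Ctx r M M' → Ctx r (app M N) (app M' N)
  | appR (M : Term) {N N'} : Ctx r N N' → Ctx r (app M N) (app M N')

/-- σ-reduction: contextual closure of σ₁ ∪ σ₃. -/
def SigmaRed : Term → Term → Prop := Ctx SigmaBase

/-- v-reduction: contextual closure of β_v ∪ σ₁ ∪ σ₃. -/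
def Red : Term → Term → Prop := Ctx VBase

/-- Head β_v-reduction. -/
inductive HeadBeta : Term → Term → Prop
  | beta (M V : Term) (Ms : List Term) : isValue V →
      HeadBeta (appList (app (lam M) V) Ms) (appList (subst M 0 V) Ms)
  | right (V : Term) {N N'} (Ms : List Term) : isValue V → HeadBeta N N' →
      HeadBeta (appList (app V N) Ms) (appList (app V N') Ms)

/-- Head σ-reduction. -/
inductive HeadSigma : Term → Term → Prop
  | sigma1 (M N L : Term) (Ms : List Term) :
      HeadSigma (appList (app (app (lam M) N) L) Ms)
                (appList (app (lam (app M (lift 0 L))) N) Ms)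
  | sigma3 (V L N : Term) (Ms : List Term) : isValue V →
      HeadSigma (appList (app V (app (lam L) N)) Ms)
                (appList (app (lam (app (lift 0 V) L)) N) Ms)
  | right (V : Term) {N N'} (Ms : List Term) : isValue V → HeadSigma N N' →
      HeadSigma (appList (app V N) Ms) (appList (app V N') Ms)

/-- Head v-reduction: head β_v ∪ head σ. -/
def HeadRed (M N : Term) : Prop := HeadBeta M N ∨ HeadSigma M N

/-- Internal v-reduction: v-steps that are not head v-steps. -/
def IntRed (M N : Term) : Prop := Red M N ∧ ¬ HeadRed M N

/-- Parallel reduction of the shuffling calculus λ_v^σ. -/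
inductive Par : Term → Term → Prop
  | var (x : ℕ) {Ms Ms' : List Term} : List.Forall₂ Par Ms Ms' →
      Par (appList (var x) Ms) (appList (var x) Ms')
  | lam {M M'} {Ms Ms' : List Term} : Par M M' → List.Forall₂ Par Ms Ms' →
      Par (appList (lam M) Ms) (appList (lam M') Ms')
  | beta {M M' V V'} {Ms Ms' : List Term} : isValue V → isValue V' →
      Par M M' → Par V V' → List.Forall₂ Par Ms Ms' →
      Par (appList (app (lam M) V) Ms) (appList (subst M' 0 V') Ms')
  | sigma1 {M M' N N' L L'} {Ms Ms' : List Term} :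
      Par M M' → Par N N' → Par L L' → List.Forall₂ Par Ms Ms' →
      Par (appList (app (app (lam M) N) L) Ms)
          (appList (app (lam (app M' (lift 0 L'))) N') Ms')
  | sigma3 {V V' L L' N N'} {Ms Ms' : List Term} : isValue V → isValue V' →
      Par V V' → Par L L' → Par N N' → List.Forall₂ Par Ms Ms' →
      Par (appList (app V (app (lam L) N)) Ms)
          (appList (app (lam (app (lift 0 V') L')) N') Ms')

/-- Internal parallel reduction. -/
inductive IPar : Term → Term → Prop
  | lam {N N'} : Par N N' → IPar (lam N) (lam N')
  | var (x : ℕ) : IPar (var x) (var x)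
  | right {V V' N N'} {Ms Ms' : List Term} : isValue V → isValue V' →
      Par V V' → IPar N N' → List.Forall₂ Par Ms Ms' →
      IPar (appList (app V N) Ms) (appList (app V' N') Ms')

/-- One-hole contexts. -/
inductive Ctx1 : Type
  | hole : Ctx1
  | lam : Ctx1 → Ctx1
  | appL : Ctx1 → Term → Ctx1
  | appR : Term → Ctx1 → Ctx1

/-- Capture-allowing hole filling. -/
def fill : Ctx1 → Term → Term
  | .hole, M => M
  | .lam C, M => lam (fill C M)
  | .appL C N, M => app (fill C M) N
  | .appR N C, M => app N (fill C M)

/-- `M` halts: head β_v-reduction from `M` reaches a value. -/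
def Halts (M : Term) : Prop := ∃ V, isValue V ∧ Relation.ReflTransGen HeadBeta M V

end Term


namespace Term

/-! ### Auxiliary reformulation of head reductions -/

inductive HB : Term → Term → Prop
  | beta {M V} : isValue V → HB (app (lam M) V) (subst M 0 V)
  | right {V N N'} : isValue V → HB N N' → HB (app V N) (app V N')
  | left {M M'} (L : Term) : HB M M' → HB (app M L) (app M' L)

inductive HS : Term → Term → Prop
  | sigma1 (M N L : Term) :
      HS (app (app (lam M) N) L) (app (lam (app M (lift 0 L))) N)
  | sigma3 {V : Term} (L N : Term) : isValue V →
      HS (app V (app (lam L) N)) (app (lam (app (lift 0 V) L)) N)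
  | right {V N N'} : isValue V → HS N N' → HS (app V N) (app V N')
  | left {M M'} (L : Term) : HS M M' → HS (app M L) (app M' L)

theorem appList_append (M : Term) (Ms Ns : List Term) :
    appList M (Ms ++ Ns) = appList (appList M Ms) Ns := by
  induction Ms generalizing M with
  | nil => rfl
  | cons a l ih => simp [appList, ih]

theorem headBeta_left {M M' : Term} (L : Term) (h : HeadBeta M M') :
    HeadBeta (app M L) (app M' L) := by
  induction h with
  | beta M V Ms hv =>
      rw [show app (appList (app (lam M) V) Ms) L
            = appList (app (lam M) V) (Ms ++ [L]) by rw [appList_append]; rfl,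
          show app (appList (subst M 0 V) Ms) L
            = appList (subst M 0 V) (Ms ++ [L]) by rw [appList_append]; rfl]
      exact HeadBeta.beta M V (Ms ++ [L]) hv
  | right V Ms hv h ih =>
      rename_i N N'
      rw [show app (appList (app V N) Ms) L
            = appList (app V N) (Ms ++ [L]) by rw [appList_append]; rfl,
          show app (appList (app V N') Ms) L
            = appList (app V N') (Ms ++ [L]) by rw [appList_append]; rfl]
      exact HeadBeta.right V (Ms ++ [L]) hv h

theorem headSigma_left {M M' : Term} (L : Term) (h : HeadSigma M M') :
    HeadSigma (app M L) (app M' L) := by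
  induction h with
  | sigma1 M N L0 Ms =>
      rw [show app (appList (app (app (lam M) N) L0) Ms) L
            = appList (app (app (lam M) N) L0) (Ms ++ [L]) by rw [appList_append]; rfl,
          show app (appList (app (lam (app M (lift 0 L0))) N) Ms) L
            = appList (app (lam (app M (lift 0 L0))) N) (Ms ++ [L]) by rw [appList_append]; rfl]
      exact HeadSigma.sigma1 M N L0 (Ms ++ [L])
  | sigma3 V L0 N Ms hv =>
      rw [show app (appList (app V (app (lam L0) N)) Ms) L
            = appList (app V (app (lam L0) N)) (Ms ++ [L]) by rw [appList_append]; rfl,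
          show app (appList (app (lam (app (lift 0 V) L0)) N) Ms) L
            = appList (app (lam (app (lift 0 V) L0)) N) (Ms ++ [L]) by rw [appList_append]; rfl]
      exact HeadSigma.sigma3 V L0 N (Ms ++ [L]) hv
  | right V Ms hv h ih =>
      rename_i N N'
      rw [show app (appList (app V N) Ms) L
            = appList (app V N) (Ms ++ [L]) by rw [appList_append]; rfl,
          show app (appList (app V N') Ms) L
            = appList (app V N') (Ms ++ [L]) by rw [appList_append]; rfl]
      exact HeadSigma.right V (Ms ++ [L]) hv h

theorem hb_appList {M M' : Term} (Ms : List Term) (h : HB M M') :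
    HB (appList M Ms) (appList M' Ms) := by
  induction Ms generalizing M M' with
  | nil => exact h
  | cons a l ih => exact ih (HB.left a h)

theorem hs_appList {M M' : Term} (Ms : List Term) (h : HS M M') :
    HS (appList M Ms) (appList M' Ms) := by
  induction Ms generalizing M M' with
  | nil => exact h
  | cons a l ih => exact ih (HS.left a h)

theorem hb_of_headBeta {M M' : Term} (h : HeadBeta M M') : HB M M' := by
  induction h with
  | beta M V Ms hv => exact hb_appList Ms (HB.beta hv)
  | right V Ms hv h ih => exact hb_appList Ms (HB.right hv ih)

theorem hs_of_headSigma {M M' : Term} (h : HeadSigma M M') : HS M M' := by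
  induction h with
  | sigma1 M N L Ms => exact hs_appList Ms (HS.sigma1 M N L)
  | sigma3 V L N Ms hv => exact hs_appList Ms (HS.sigma3 L N hv)
  | right V Ms hv h ih => exact hs_appList Ms (HS.right hv ih)

theorem headBeta_of_hb {M M' : Term} (h : HB M M') : HeadBeta M M' := by
  induction h with
  | beta hv => exact HeadBeta.beta _ _ [] hv
  | right hv h ih => exact HeadBeta.right _ [] hv ih
  | left L h ih => exact headBeta_left L ih

theorem headSigma_of_hs {M M' : Term} (h : HS M M') : HeadSigma M M' := by
  induction h with
  | sigma1 M N L => exact HeadSigma.sigma1 M N L []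
  | sigma3 L N hv => exact HeadSigma.sigma3 _ L N [] hv
  | right hv h ih => exact HeadSigma.right _ [] hv ih
  | left L h ih => exact headSigma_left L ih

theorem hb_lhs_app {M M' : Term} (h : HB M M') : ∃ A B, M = app A B := by
  cases h <;> exact ⟨_, _, rfl⟩

theorem hs_rhs_app {M M' : Term} (h : HS M M') : ∃ A B, M' = app A B := by
  cases h <;> exact ⟨_, _, rfl⟩

theorem subst_lift : ∀ (L : Term) (k : ℕ) (V : Term), subst (lift k L) k V = L
  | var n, k, V => by
      rcases Nat.lt_or_ge n k with h | h
      · simp [lift, subst, h, Nat.ne_of_lt h, Nat.not_lt.2 h.le]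
      · have h1 : ¬ n + 1 = k := by omega
        have h2 : k < n + 1 := by omega
        simp [lift, subst, Nat.not_lt.2 h, h1, h2]
  | lam M, k, V => by simp [lift, subst, subst_lift M]
  | app M N, k, V => by simp [lift, subst, subst_lift M, subst_lift N]

/-- Local swap: a head σ-step followed by a head β-step can be replaced by a
head β-step followed by at most one head σ-step. -/
theorem swap {M N P : Term} (hs : HS M N) (hb : HB N P) :
    ∃ Q, HB M Q ∧ (Q = P ∨ HS Q P) := by
  induction hs generalizing P with
  | sigma1 M₀ N₀ L =>
      cases hb with
      | beta hv =>
          exact ⟨_, HB.left L (HB.beta hv), Or.inl (by simp [subst, subst_lift])⟩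
      | right hv hb' =>
          exact ⟨_, HB.left L (HB.right trivial hb'), Or.inr (HS.sigma1 _ _ _)⟩
      | left _ hb' =>
          obtain ⟨A, B, hAB⟩ := hb_lhs_app hb'
          cases hAB
  | sigma3 L₀ N₀ hV =>
      cases hb with
      | beta hv =>
          exact ⟨_, HB.right hV (HB.beta hv), Or.inl (by simp [subst, subst_lift])⟩
      | right hv hb' =>
          exact ⟨_, HB.right hV (HB.right trivial hb'), Or.inr (HS.sigma3 _ _ hV)⟩
      | left _ hb' =>
          obtain ⟨A, B, hAB⟩ := hb_lhs_app hb'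
          cases hAB
  | right hV hN ih =>
      rename_i V N₀ N₀'
      cases hb with
      | beta hv =>
          obtain ⟨A, B, rfl⟩ := hs_rhs_app hN
          exact absurd hv (by simp [isValue])
      | right hv hb' =>
          obtain ⟨Q₀, hbQ, hor⟩ := ih hb'
          exact ⟨app V Q₀, HB.right hV hbQ,
            hor.imp (fun e => by rw [e]) (fun h => HS.right hV h)⟩
      | left _ hb' =>
          obtain ⟨A, B, hAB⟩ := hb_lhs_app hb'
          subst hAB
          exact absurd hV (by simp [isValue])
  | left L hM ih =>
      rename_i M₀ N₀
      cases hb with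
      | beta hv =>
          obtain ⟨A, B, hAB⟩ := hs_rhs_app hM
          cases hAB
      | right hv hb' =>
          obtain ⟨A, B, rfl⟩ := hs_rhs_app hM
          exact absurd hv (by simp [isValue])
      | left _ hb' =>
          obtain ⟨Q₀, hbQ, hor⟩ := ih hb'
          exact ⟨app Q₀ L, HB.left L hbQ,
            hor.imp (fun e => by rw [e]) (fun h => HS.left L h)⟩

theorem swap_star {M N P : Term} (hs : Relation.ReflTransGen HS M N) (hb : HB N P) :
    ∃ Q, HB M Q ∧ Relation.ReflTransGen HS Q P := by
  induction hs using Relation.ReflTransGen.head_induction_on generalizing P with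
  | refl => exact ⟨P, hb, Relation.ReflTransGen.refl⟩
  | head h _ ih =>
      obtain ⟨Q₁, hb₁, hs₁⟩ := ih hb
      obtain ⟨Q, hbQ, hor⟩ := swap h hb₁
      rcases hor with rfl | h2
      · exact ⟨Q, hbQ, hs₁⟩
      · exact ⟨Q, hbQ, Relation.ReflTransGen.head h2 hs₁⟩

theorem main' {M M2 : Term}
    (h : Relation.ReflTransGen (fun a b => HB a b ∨ HS a b) M M2) :
    ∃ N, Relation.ReflTransGen HB M N ∧ Relation.ReflTransGen HS N M2 := by
  induction h with
  | refl => exact ⟨M, Relation.ReflTransGen.refl, Relation.ReflTransGen.refl⟩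
  | tail _ h2 ih =>
      obtain ⟨N, hbN, hsN⟩ := ih
      rcases h2 with hb | hs
      · obtain ⟨Q, hbQ, hsQ⟩ := swap_star hsN hb
        exact ⟨Q, hbN.tail hbQ, hsQ⟩
      · exact ⟨N, hbN, hsN.tail hs⟩

end Term

open Term Relation in
theorem head_sequentialize {M M2 : Term} (h : ReflTransGen HeadRed M M2) :
    ∃ N, ReflTransGen HeadBeta M N ∧ ReflTransGen HeadSigma N M2 := by
  obtain ⟨N, hb, hs⟩ := Term.main' (ReflTransGen.mono (fun _ _ hr => hr.imp Term.hb_of_headBeta Term.hs_of_headSigma) _ _ h)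
  exact ⟨N, ReflTransGen.mono (fun _ _ h => Term.headBeta_of_hb h) _ _ hb, ReflTransGen.mono (fun _ _ h => Term.headSigma_of_hs h) _ _ hs⟩
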